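/- If ε has finite second moment and τ ∈ (0,1), then b ↦ E[ρ_τ(ε - b)] for the expectile loss ρ_τ(u) = |τ - 1_{u<0}|u² is strictly convex and has a unique minimizer b*, characterized by E[g_τ(ε - b*)] = 0 where g_τ(u) = 2τ u 1_{u≥0} + 2(1-τ) u 1_{u<0}. -/

import Mathlib

open MeasureTheory

/-- The expectile loss `ρ_τ(u) = τ u² 1_{u≥0} + (1-τ) u² 1_{u<0}`. -/
noncomputable def expectileLoss (τ u : ℝ) : ℝ :=
  τ * u ^ 2 * (if 0 ≤ u then 1 else 0) + (1 - τ) * u ^ 2 * (if u < 0 then 1 else 0)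

/-- Its derivative `g_τ(u) = 2τ u 1_{u≥0} + 2(1-τ) u 1_{u<0}`. -/
noncomputable def expectileScore (τ u : ℝ) : ℝ :=
  2 * τ * u * (if 0 ≤ u then 1 else 0) + 2 * (1 - τ) * u * (if u < 0 then 1 else 0)

lemma el_eq (τ u : ℝ) : expectileLoss τ u = τ * max u 0 ^ 2 + (1 - τ) * min u 0 ^ 2 := by
  unfold expectileLoss
  rcases le_or_gt 0 u with h | h
  · rw [if_pos h, if_neg (not_lt.2 h), max_eq_left h, min_eq_right h]; ring
  · rw [if_neg (not_le.2 h), if_pos h, max_eq_right h.le, min_eq_left h.le]; ring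

lemma es_eq (τ u : ℝ) : expectileScore τ u = 2 * τ * max u 0 + 2 * (1 - τ) * min u 0 := by
  unfold expectileScore
  rcases le_or_gt 0 u with h | h
  · rw [if_pos h, if_neg (not_lt.2 h), max_eq_left h, min_eq_right h]; ring
  · rw [if_neg (not_le.2 h), if_pos h, max_eq_right h.le, min_eq_left h.le]; ring

lemma hasDerivAt_maxsq (u : ℝ) : HasDerivAt (fun x : ℝ => max x 0 ^ 2) (2 * max u 0) u := by
  rcases lt_trichotomy u 0 with h | h | h
  · have : HasDerivAt (fun _ : ℝ => (0:ℝ)) 0 u := hasDerivAt_const u 0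
    rw [max_eq_right h.le, mul_zero]
    refine this.congr_of_eventuallyEq ?_
    filter_upwards [Iio_mem_nhds h] with x hx
    rw [max_eq_right (le_of_lt hx)]; norm_num
  · subst h
    rw [max_self, mul_zero]
    rw [hasDerivAt_iff_isLittleO]
    rw [Asymptotics.isLittleO_iff]
    intro c hc
    filter_upwards [Metric.ball_mem_nhds (0:ℝ) hc] with x hx
    rw [Real.ball_eq_Ioo] at hx
    obtain ⟨hxa, hxb⟩ := hx
    have hax : |x| < c := abs_lt.2 ⟨by linarith, by linarith⟩
    have h1 : (0:ℝ) ≤ max x 0 := le_max_right _ _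
    have h2 : max x 0 ≤ |x| := max_le (le_abs_self x) (abs_nonneg x)
    have hg : max x 0 ^ 2 - max (0:ℝ) 0 ^ 2 - (x - 0) • (0:ℝ) = max x 0 ^ 2 := by simp
    rw [hg, Real.norm_eq_abs, abs_of_nonneg (sq_nonneg _), Real.norm_eq_abs, sub_zero]
    nlinarith [abs_nonneg x]
  · have : HasDerivAt (fun x : ℝ => x ^ 2) (2 * u) u := by
      simpa using hasDerivAt_pow 2 u
    rw [max_eq_left h.le]
    refine this.congr_of_eventuallyEq ?_
    filter_upwards [Ioi_mem_nhds h] with x hx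
    rw [max_eq_left (le_of_lt hx)]

lemma hasDerivAt_minsq (u : ℝ) : HasDerivAt (fun x : ℝ => min x 0 ^ 2) (2 * min u 0) u := by
  have h := (hasDerivAt_maxsq (-u)).comp u (hasDerivAt_neg u)
  have heq : (fun x : ℝ => max (-x) 0 ^ 2) = fun x : ℝ => min x 0 ^ 2 := by
    funext x
    have : max (-x) 0 = -min x 0 := by rw [← neg_zero, max_neg_neg, neg_zero]
    rw [this]; ring
  have hval : 2 * max (-u) 0 * (-1) = 2 * min u 0 := by
    have : max (-u) 0 = -min u 0 := by rw [← neg_zero, max_neg_neg, neg_zero]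
    rw [this]; ring
  rw [show ((fun x : ℝ => max x 0 ^ 2) ∘ fun x => -x) = fun x : ℝ => max (-x) 0 ^ 2 from rfl] at h
  rw [heq, hval] at h
  exact h

lemma hasDerivAt_el (τ u : ℝ) : HasDerivAt (expectileLoss τ) (expectileScore τ u) u := by
  have h := ((hasDerivAt_maxsq u).const_mul τ).add ((hasDerivAt_minsq u).const_mul (1 - τ))
  have hf : (fun x : ℝ => τ * max x 0 ^ 2 + (1 - τ) * min x 0 ^ 2) = expectileLoss τ :=
    funext fun x => (el_eq τ x).symm
  change HasDerivAt (fun x : ℝ => τ * max x 0 ^ 2 + (1 - τ) * min x 0 ^ 2) _ u at h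
  rw [hf] at h
  convert h using 1
  rw [es_eq]; ring

lemma hasDerivAt_el_sub (τ x b : ℝ) :
    HasDerivAt (fun b : ℝ => expectileLoss τ (x - b)) (-expectileScore τ (x - b)) b := by
  have h1 : HasDerivAt (fun b : ℝ => x - b) (-1) b := (hasDerivAt_id b).const_sub x
  have h := (hasDerivAt_el τ (x - b)).comp b h1
  rw [show expectileScore τ (x - b) * -1 = -expectileScore τ (x - b) by ring] at h
  exact h

lemma continuous_el (τ : ℝ) : Continuous (expectileLoss τ) := by
  have hf : (fun x : ℝ => τ * max x 0 ^ 2 + (1 - τ) * min x 0 ^ 2) = expectileLoss τ :=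
    funext fun x => (el_eq τ x).symm
  rw [← hf]
  fun_prop

lemma continuous_es (τ : ℝ) : Continuous (expectileScore τ) := by
  have hf : (fun x : ℝ => 2 * τ * max x 0 + 2 * (1 - τ) * min x 0) = expectileScore τ :=
    funext fun x => (es_eq τ x).symm
  rw [← hf]
  fun_prop

lemma es_strictMono {τ : ℝ} (hτ0 : 0 < τ) (hτ1 : τ < 1) : StrictMono (expectileScore τ) := by
  intro u v huv
  rw [es_eq, es_eq]
  have h1 : max u 0 ≤ max v 0 := max_le_max huv.le le_rfl
  have h2 : min u 0 ≤ min v 0 := min_le_min huv.le le_rfl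
  have h3 : max u 0 + min u 0 = u + 0 := max_add_min u 0
  have h4 : max v 0 + min v 0 = v + 0 := max_add_min v 0
  rcases lt_or_eq_of_le h1 with h | h
  · nlinarith [mul_pos hτ0 (sub_pos.2 h),
      mul_nonneg (by linarith : (0:ℝ) ≤ 1 - τ) (sub_nonneg.2 h2)]
  · have hb : min u 0 < min v 0 := by rw [h] at h3; linarith
    nlinarith [mul_pos (by linarith : (0:ℝ) < 1 - τ) (sub_pos.2 hb),
      mul_nonneg hτ0.le (sub_nonneg.2 h1)]

lemma es_abs_le {τ : ℝ} (hτ0 : 0 < τ) (hτ1 : τ < 1) (u : ℝ) :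
    |expectileScore τ u| ≤ 2 * |u| := by
  rw [es_eq]
  have h1 : (0:ℝ) ≤ max u 0 := le_max_right _ _
  have h2 : max u 0 ≤ |u| := max_le (le_abs_self u) (abs_nonneg u)
  have h3 : min u 0 ≤ 0 := min_le_right _ _
  have h4 : -|u| ≤ min u 0 := le_min (neg_abs_le u) (by simp [abs_nonneg])
  rw [abs_le]
  constructor <;> nlinarith

lemma el_nonneg {τ : ℝ} (hτ0 : 0 < τ) (hτ1 : τ < 1) (u : ℝ) : 0 ≤ expectileLoss τ u := by
  rw [el_eq]
  nlinarith [pow_two_nonneg (max u 0), pow_two_nonneg (min u 0)]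

lemma el_le_sq {τ : ℝ} (hτ0 : 0 < τ) (hτ1 : τ < 1) (u : ℝ) : expectileLoss τ u ≤ u ^ 2 := by
  rw [el_eq]
  have h3 : max u 0 + min u 0 = u + 0 := max_add_min u 0
  have h5 : max u 0 * min u 0 = 0 := by
    rcases le_or_gt 0 u with h | h
    · rw [min_eq_right h]; ring
    · rw [max_eq_right h.le]; ring
  have hu : u = max u 0 + min u 0 := by linarith
  have h6 : u ^ 2 = (max u 0 + min u 0) ^ 2 := by rw [← hu]
  rw [h6]
  nlinarith [mul_nonneg (by linarith : (0:ℝ) ≤ 1 - τ) (sq_nonneg (max u 0)),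
    mul_nonneg hτ0.le (sq_nonneg (min u 0))]

lemma min_int {Ω : Type*} [MeasurableSpace Ω] {μ : Measure Ω} {g : Ω → ℝ}
    (hg : Integrable g μ) : Integrable (fun ω => min (g ω) 0) μ := by
  refine (hg.neg.pos_part).neg.congr (Filter.Eventually.of_forall fun ω => ?_)
  show -(max (-g ω) 0) = min (g ω) 0
  rcases le_total (g ω) 0 with h | h
  · rw [min_eq_left h, max_eq_left (by linarith), neg_neg]
  · rw [min_eq_right h, max_eq_right (by linarith), neg_zero]

/-- If ε has finite second moment and τ ∈ (0,1), then `b ↦ E[ρ_τ(ε - b)]` is strictly convex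
with a unique minimizer `b*`, characterized by `E[g_τ(ε - b*)] = 0`. -/
theorem expectileLoss_strictConvex_unique_min {Ω : Type*} [MeasurableSpace Ω] (μ : Measure Ω)
    [IsProbabilityMeasure μ] (τ : ℝ) (hτ : τ ∈ Set.Ioo (0 : ℝ) 1)
    (ε : Ω → ℝ) (hmeas : Measurable ε) (hL2 : MemLp ε 2 μ) :
    StrictConvexOn ℝ Set.univ (fun b : ℝ => ∫ ω, expectileLoss τ (ε ω - b) ∂μ) ∧
    (∃! b : ℝ, IsMinOn (fun b : ℝ => ∫ ω, expectileLoss τ (ε ω - b) ∂μ) Set.univ b) ∧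
    (∀ b : ℝ, IsMinOn (fun b : ℝ => ∫ ω, expectileLoss τ (ε ω - b) ∂μ) Set.univ b ↔
      ∫ ω, expectileScore τ (ε ω - b) ∂μ = 0) := by
  obtain ⟨hτ0, hτ1⟩ := hτ
  have h1τ : (0:ℝ) < 1 - τ := by linarith
  -- integrability facts
  have hεint : Integrable ε μ := hL2.integrable (by norm_num)
  have hsubL2 : ∀ b : ℝ, MemLp (fun ω => ε ω - b) 2 μ := fun b => hL2.sub (memLp_const b)
  have hsubint : ∀ b : ℝ, Integrable (fun ω => ε ω - b) μ :=
    fun b => (hsubL2 b).integrable (by norm_num)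
  have hmeasb : ∀ b : ℝ, AEStronglyMeasurable (fun ω => ε ω - b) μ :=
    fun b => (hsubint b).aestronglyMeasurable
  have hlossmeas : ∀ b : ℝ, AEStronglyMeasurable (fun ω => expectileLoss τ (ε ω - b)) μ :=
    fun b => (continuous_el τ).comp_aestronglyMeasurable (hmeasb b)
  have hscoremeas : ∀ b : ℝ, AEStronglyMeasurable (fun ω => expectileScore τ (ε ω - b)) μ :=
    fun b => (continuous_es τ).comp_aestronglyMeasurable (hmeasb b)
  have hlossint : ∀ b : ℝ, Integrable (fun ω => expectileLoss τ (ε ω - b)) μ := by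
    intro b
    refine ((hsubL2 b).integrable_sq).mono' (hlossmeas b) ?_
    filter_upwards with ω
    rw [Real.norm_eq_abs, abs_of_nonneg (el_nonneg hτ0 hτ1 _)]
    exact el_le_sq hτ0 hτ1 _
  have hscoreint : ∀ b : ℝ, Integrable (fun ω => expectileScore τ (ε ω - b)) μ := by
    intro b
    refine (((hsubint b).abs).const_mul 2).mono' (hscoremeas b) ?_
    filter_upwards with ω
    rw [Real.norm_eq_abs]
    exact es_abs_le hτ0 hτ1 _
  set f : ℝ → ℝ := fun b => ∫ ω, expectileLoss τ (ε ω - b) ∂μ with hfdef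
  set φ : ℝ → ℝ := fun b => ∫ ω, expectileScore τ (ε ω - b) ∂μ with hφdef
  -- derivative of f
  have key : ∀ b : ℝ, HasDerivAt f (-φ b) b := by
    intro b₀
    have h := hasDerivAt_integral_of_dominated_loc_of_deriv_le
      (F := fun (b : ℝ) (ω : Ω) => expectileLoss τ (ε ω - b))
      (F' := fun (b : ℝ) (ω : Ω) => -expectileScore τ (ε ω - b)) (x₀ := b₀)
      (bound := fun ω => 2 * |ε ω| + 2 * (|b₀| + 1)) (Metric.ball_mem_nhds b₀ one_pos)
      (Filter.Eventually.of_forall fun b => hlossmeas b) (hlossint b₀)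
      ((hscoremeas b₀).neg) ?_ ?_ ?_
    · rcases h with ⟨-, h2⟩
      have hne : (∫ ω, -expectileScore τ (ε ω - b₀) ∂μ) = -φ b₀ := by
        rw [integral_neg]
      rw [hne] at h2
      exact h2
    · filter_upwards with ω
      intro b hb
      rw [Real.norm_eq_abs, abs_neg]
      have h1 : |expectileScore τ (ε ω - b)| ≤ 2 * |ε ω - b| := es_abs_le hτ0 hτ1 _
      have h2 : |ε ω - b| ≤ |ε ω| + |b| := by
        rw [sub_eq_add_neg]
        exact (abs_add_le _ _).trans (le_of_eq (by rw [abs_neg]))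
      have hb' : |b - b₀| < 1 := by
        have := Metric.mem_ball.1 hb
        rwa [Real.dist_eq] at this
      have h3 : |b| ≤ |b₀| + 1 := by
        have he : |b| = |b₀ + (b - b₀)| := congrArg abs (by ring)
        calc |b| = |b₀ + (b - b₀)| := he
          _ ≤ |b₀| + |b - b₀| := abs_add_le _ _
          _ ≤ |b₀| + 1 := by linarith
      linarith
    · exact ((hεint.abs).const_mul 2).add (integrable_const _)
    · filter_upwards with ω
      intro b hb
      exact hasDerivAt_el_sub τ (ε ω) b
  have hfd : Differentiable ℝ f := fun b => (key b).differentiableAt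
  have hderiv : ∀ b, deriv f b = -φ b := fun b => (key b).deriv
  -- strict integral inequality
  have int_lt : ∀ g h : Ω → ℝ, Integrable g μ → Integrable h μ → (∀ ω, g ω < h ω) →
      ∫ ω, g ω ∂μ < ∫ ω, h ω ∂μ := by
    intro g h hg hh hlt
    have hpos : 0 < ∫ ω, (h ω - g ω) ∂μ := by
      rw [integral_pos_iff_support_of_nonneg (fun ω => sub_nonneg.2 (hlt ω).le) (hh.sub hg)]
      have hs : Function.support (fun ω => h ω - g ω) = Set.univ :=
        Set.eq_univ_of_forall fun ω => sub_ne_zero.2 (hlt ω).ne'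
      rw [hs, measure_univ]
      exact one_pos
    rw [integral_sub hh hg] at hpos
    linarith
  have hφanti : StrictAnti φ := by
    intro b1 b2 h12
    exact int_lt _ _ (hscoreint b2) (hscoreint b1)
      (fun ω => es_strictMono hτ0 hτ1 (by linarith : ε ω - b2 < ε ω - b1))
  have hmono : StrictMono (deriv f) := by
    intro b1 b2 h12
    rw [hderiv, hderiv]
    exact neg_lt_neg (hφanti h12)
  have hconv : StrictConvexOn ℝ Set.univ f :=
    StrictMono.strictConvexOn_univ_of_deriv hfd.continuous hmono
  -- characterization of minimizers
  have hchar : ∀ b : ℝ, IsMinOn f Set.univ b ↔ φ b = 0 := by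
    intro b
    constructor
    · intro hmin
      have hloc : IsLocalMin f b := hmin.isLocalMin Filter.univ_mem
      have hz := hloc.deriv_eq_zero
      rw [hderiv] at hz
      linarith
    · intro h0
      have hd0 : deriv f b = 0 := by rw [hderiv b, h0, neg_zero]
      rw [isMinOn_iff]
      intro x _
      rcases lt_trichotomy x b with hx | hx | hx
      · have hanti : StrictAntiOn f (Set.Iic b) :=
          strictAntiOn_of_deriv_neg (convex_Iic b) hfd.continuous.continuousOn
            (fun y hy => by
              rw [interior_Iic] at hy
              rw [← hd0]
              exact hmono hy)
        exact (hanti (Set.mem_Iic.2 hx.le) (Set.mem_Iic.2 le_rfl) hx).le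
      · rw [hx]
      · have hmon : StrictMonoOn f (Set.Ici b) :=
          strictMonoOn_of_deriv_pos (convex_Ici b) hfd.continuous.continuousOn
            (fun y hy => by
              rw [interior_Ici] at hy
              rw [← hd0]
              exact hmono hy)
        exact (hmon (Set.mem_Ici.2 le_rfl) (Set.mem_Ici.2 hx.le) hx).le
  -- existence of a critical point
  have hAint : Integrable (fun ω => max (ε ω) 0) μ := hεint.pos_part
  have hBint : Integrable (fun ω => min (ε ω) 0) μ := min_int hεint
  set A := ∫ ω, max (ε ω) 0 ∂μ with hAdef
  set B := ∫ ω, min (ε ω) 0 ∂μ with hBdef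
  set M := ∫ ω, ε ω ∂μ with hMdef
  have hub : ∀ b : ℝ, 0 ≤ b → φ b ≤ 2 * τ * A + 2 * (1 - τ) * (M - b) := by
    intro b hb
    have hle : ∀ ω, expectileScore τ (ε ω - b) ≤
        2 * τ * max (ε ω) 0 + 2 * (1 - τ) * (ε ω - b) := by
      intro ω
      rw [es_eq]
      have h1 : max (ε ω - b) 0 ≤ max (ε ω) 0 := max_le_max (by linarith) le_rfl
      have h2 : min (ε ω - b) 0 ≤ ε ω - b := min_le_left _ _
      have e1 := mul_le_mul_of_nonneg_left h1 (by linarith : (0:ℝ) ≤ 2 * τ)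
      have e2 := mul_le_mul_of_nonneg_left h2 (by linarith : (0:ℝ) ≤ 2 * (1 - τ))
      linarith
    calc φ b ≤ ∫ ω, (2 * τ * max (ε ω) 0 + 2 * (1 - τ) * (ε ω - b)) ∂μ :=
        integral_mono (hscoreint b) ((hAint.const_mul _).add ((hsubint b).const_mul _)) hle
      _ = 2 * τ * A + 2 * (1 - τ) * (M - b) := by
        rw [integral_add (hAint.const_mul _) ((hsubint b).const_mul _),
          integral_const_mul, integral_const_mul, integral_sub hεint (integrable_const b),
          integral_const]
        simp [measure_univ]
        rfl
  have hlb : ∀ b : ℝ, b ≤ 0 → 2 * τ * (M - b) + 2 * (1 - τ) * B ≤ φ b := by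
    intro b hb
    have hle : ∀ ω, 2 * τ * (ε ω - b) + 2 * (1 - τ) * min (ε ω) 0 ≤
        expectileScore τ (ε ω - b) := by
      intro ω
      rw [es_eq]
      have h1 : ε ω - b ≤ max (ε ω - b) 0 := le_max_left _ _
      have h2 : min (ε ω) 0 ≤ min (ε ω - b) 0 := min_le_min (by linarith) le_rfl
      have e1 := mul_le_mul_of_nonneg_left h1 (by linarith : (0:ℝ) ≤ 2 * τ)
      have e2 := mul_le_mul_of_nonneg_left h2 (by linarith : (0:ℝ) ≤ 2 * (1 - τ))
      linarith
    calc 2 * τ * (M - b) + 2 * (1 - τ) * B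
        = ∫ ω, (2 * τ * (ε ω - b) + 2 * (1 - τ) * min (ε ω) 0) ∂μ := by
          rw [integral_add ((hsubint b).const_mul _) (hBint.const_mul _),
            integral_const_mul, integral_const_mul, integral_sub hεint (integrable_const b),
            integral_const]
          simp [measure_univ]
          rfl
      _ ≤ φ b := integral_mono (((hsubint b).const_mul _).add (hBint.const_mul _))
          (hscoreint b) hle
  set b₂ : ℝ := max 0 ((2 * τ * A + 2 * (1 - τ) * M) / (2 * (1 - τ))) + 1 with hb₂def
  set b₁ : ℝ := min 0 ((2 * τ * M + 2 * (1 - τ) * B) / (2 * τ)) - 1 with hb₁def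
  have hb₂0 : (0:ℝ) ≤ b₂ := by
    have := le_max_left (0:ℝ) ((2 * τ * A + 2 * (1 - τ) * M) / (2 * (1 - τ)))
    simp only [hb₂def]; linarith
  have hb₁0 : b₁ ≤ 0 := by
    have := min_le_left (0:ℝ) ((2 * τ * M + 2 * (1 - τ) * B) / (2 * τ))
    simp only [hb₁def]; linarith
  have hφb₂ : φ b₂ < 0 := by
    have hq : (2 * τ * A + 2 * (1 - τ) * M) / (2 * (1 - τ)) < b₂ :=
      (le_max_right _ _).trans_lt (lt_add_one _)
    have hq' := (div_lt_iff₀ (by linarith : (0:ℝ) < 2 * (1 - τ))).1 hq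
    have := hub b₂ hb₂0
    nlinarith
  have hφb₁ : 0 < φ b₁ := by
    have hq : b₁ < (2 * τ * M + 2 * (1 - τ) * B) / (2 * τ) :=
      (sub_lt_self _ one_pos).trans_le (min_le_right _ _)
    have hq' := (lt_div_iff₀ (by linarith : (0:ℝ) < 2 * τ)).1 hq
    have := hlb b₁ hb₁0
    nlinarith
  have hb₁₂ : b₁ ≤ b₂ := by linarith
  obtain ⟨c, -, hc⟩ : (0:ℝ) ∈ (fun x => -φ x) '' Set.Ioo b₁ b₂ := by
    apply exists_hasDerivWithinAt_eq_of_gt_of_lt hb₁₂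
      (fun x _ => (key x).hasDerivWithinAt)
    · linarith
    · linarith
  have hφc : φ c = 0 := by
    have : -φ c = 0 := hc
    linarith
  have hmin_c : IsMinOn f Set.univ c := (hchar c).2 hφc
  exact ⟨hconv, ⟨c, hmin_c, fun y hy =>
    hconv.eq_of_isMinOn hy hmin_c (Set.mem_univ y) (Set.mem_univ c)⟩, hchar⟩
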